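/- Let a, b : ℤ × ℝ → ℝ be nowhere zero and differentiable in t, satisfying ∂_t a(n) = a(n)b(n)(a(n) − a(n+1)) and ∂_t b(n) = a(n)b(n)(b(n−1) − b(n)) for all n ∈ ℤ. Define v(n) = a(n)b(n) and r(n) = −a(n+1)b(n). Then (v, r) satisfies the R-Toda(+1) lattice: ∂_t v(n) = v(n)(r(n) − r(n−1)) and ∂_t r(n) = r(n)(r(n+1) + v(n+1) − r(n−1) − v(n)) for all n ∈ ℤ. -/

import Mathlib

/-- The first flow of the constrained D∆mKP system yields the R-Toda(+1)
lattice under the transformation `v = a b`, `r = -(Ea) b`. -/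
theorem constrained_dDmKP_gives_RToda
    (a b : ℤ → ℝ → ℝ)
    (ha0 : ∀ n t, a n t ≠ 0) (hb0 : ∀ n t, b n t ≠ 0)
    (ha : ∀ n t, HasDerivAt (a n) (a n t * b n t * (a n t - a (n + 1) t)) t)
    (hb : ∀ n t, HasDerivAt (b n) (a n t * b n t * (b (n - 1) t - b n t)) t) :
    let v : ℤ → ℝ → ℝ := fun n t => a n t * b n t
    let r : ℤ → ℝ → ℝ := fun n t => -(a (n + 1) t * b n t)
    (∀ n t, HasDerivAt (v n) (v n t * (r n t - r (n - 1) t)) t) ∧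
    (∀ n t, HasDerivAt (r n) 
      (r n t * (r (n + 1) t + v (n + 1) t - r (n - 1) t - v n t)) t) := by
  intro v r
  have hidx : ∀ n : ℤ, n - 1 + 1 = n := fun n => by ring
  constructor
  · intro n t
    have h := (ha n t).mul (hb n t)
    refine h.congr_deriv ?_
    simp only [v, r, hidx]
    ring
  · intro n t
    have h := ((ha (n + 1) t).mul (hb n t)).neg
    refine h.congr_deriv ?_
    simp only [v, r, hidx]
    ring
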